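/- Let k be a positive integer and fix an integer a with 1 ≤ a ≤ k. Then for all n ≥ k−1, |S_n(R^k_a)| = (k−1)!·(k−a)^{n−k+1}. -/

import Mathlib

/-- `π` contains `σ` as a pattern: there is a subsequence of `π` (in one-line notation)
whose entries are in the same relative order as those of `σ`. -/
def PContains {n k : ℕ} (π : Equiv.Perm (Fin n)) (σ : Equiv.Perm (Fin k)) : Prop :=
  ∃ f : Fin k → Fin n, StrictMono f ∧ ∀ s t : Fin k, π (f s) < π (f t) ↔ σ s < σ t

/-- `π` avoids the pattern `σ`. -/
def PAvoids {n k : ℕ} (π : Equiv.Perm (Fin n)) (σ : Equiv.Perm (Fin k)) : Prop :=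
  ¬ PContains π σ


open Finset Equiv

def Av (k a : ℕ) (hk : 1 ≤ k) {n : ℕ} (π : Equiv.Perm (Fin n)) : Prop :=
  ∀ σ : Equiv.Perm (Fin k), (σ ⟨0, hk⟩ : ℕ) + 1 ≤ a → PAvoids π σ

-- previously checked lemmas (paste later): card_filter_fin, card_filter_ge, card_filter_lt,
-- pattern_extract, ins, ins_zero, ins_succ, insEquiv
lemma card_filter_fin {N : ℕ} (P : ℕ → Prop) [DecidablePred P] :
    (univ.filter fun p : Fin N => P ↑p).card = ((range N).filter P).card := by
  refine Finset.card_bij (fun p _ => (p : ℕ)) ?_ ?_ ?_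
  · intro p hp
    simp only [mem_filter, mem_range, mem_univ, true_and] at hp ⊢
    exact ⟨p.isLt, hp⟩
  · intro p _ q _ h; exact Fin.val_injective h
  · intro m hm
    simp only [mem_filter, mem_range, mem_univ, true_and] at hm
    exact ⟨⟨m, hm.1⟩, by simpa using hm.2, rfl⟩

lemma card_filter_ge {N m : ℕ} : (univ.filter fun p : Fin N => m ≤ ↑p).card = N - m := by
  rw [card_filter_fin (m ≤ ·)]
  rw [show (range N).filter (m ≤ ·) = Ico m N by ext x; simp [Finset.mem_Ico]; omega]
  exact Nat.card_Ico m N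

lemma card_filter_lt {N m : ℕ} : (univ.filter fun p : Fin N => ↑p < m).card = min m N := by
  rw [card_filter_fin (· < m)]
  rw [show (range N).filter (· < m) = range (min m N) by ext x; simp; omega]
  simp

lemma pattern_extract {k n : ℕ} (g : Fin k → Fin n) (hg : Function.Injective g) :
    ∃ σ : Equiv.Perm (Fin k), (∀ s t, g s < g t ↔ σ s < σ t) ∧
      ∀ s, (σ s : ℕ) = (univ.filter fun t => g t < g s).card := by
  have hcard : ∀ s, (univ.filter fun t => g t < g s).card < k := by
    intro s
    have h1 : (univ.filter fun t => g t < g s) ⊆ univ.erase s := by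
      intro t ht
      simp only [mem_filter, mem_univ, true_and] at ht
      exact mem_erase.2 ⟨fun h => absurd (h ▸ ht) (lt_irrefl _), mem_univ t⟩
    calc (univ.filter fun t => g t < g s).card ≤ (univ.erase s).card := card_le_card h1
      _ < univ.card := card_erase_lt_of_mem (mem_univ s)
      _ = k := by simp
  set F : Fin k → Fin k := fun s => ⟨(univ.filter fun t => g t < g s).card, hcard s⟩ with hF
  have hmono : ∀ s t, g s < g t → F s < F t := by
    intro s t hst
    have hss : (univ.filter fun u => g u < g s) ⊂ (univ.filter fun u => g u < g t) := by
      refine ⟨fun u hu => ?_, fun hc => ?_⟩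
      · simp only [mem_filter, mem_univ, true_and] at hu ⊢; exact hu.trans hst
      · have : s ∈ (univ.filter fun u => g u < g s) := hc (by simp [hst])
        simp at this
    exact Finset.card_lt_card hss
  have hiff : ∀ s t, g s < g t ↔ F s < F t := by
    intro s t
    refine ⟨hmono s t, fun h => ?_⟩
    rcases lt_trichotomy (g s) (g t) with h1 | h1 | h1
    · exact h1
    · cases hg h1; exact absurd h (lt_irrefl _)
    · exact absurd h (not_lt.2 (le_of_lt (hmono t s h1)))
  have hinj : Function.Injective F := by
    intro s t h
    rcases lt_trichotomy (g s) (g t) with h1 | h1 | h1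
    · exact absurd (hmono s t h1) (h ▸ lt_irrefl _)
    · exact hg h1
    · exact absurd (hmono t s h1) (h ▸ lt_irrefl _)
  exact ⟨Equiv.ofBijective F (Finite.injective_iff_bijective.mp hinj),
    fun s t => hiff s t, fun s => rfl⟩

def ins {n : ℕ} (p : Fin (n+1)) (τ : Equiv.Perm (Fin n)) : Equiv.Perm (Fin (n+1)) :=
  (finSuccEquiv n).trans ((τ.optionCongr).trans (finSuccEquiv' p).symm)

lemma ins_zero {n : ℕ} (p : Fin (n+1)) (τ : Equiv.Perm (Fin n)) : ins p τ 0 = p := by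
  simp [ins]

lemma ins_succ {n : ℕ} (p : Fin (n+1)) (τ : Equiv.Perm (Fin n)) (i : Fin n) :
    ins p τ i.succ = p.succAbove (τ i) := by
  simp [ins]

-- MAIN CLAIM
lemma av_ins_iff {k a n : ℕ} (hk : 1 ≤ k) (ha1 : 1 ≤ a) (hak : a ≤ k) (hkn : k ≤ n + 1)
    (p : Fin (n+1)) (τ : Equiv.Perm (Fin n)) :
    Av k a hk (ins p τ) ↔ (n + a < ↑p + k ∧ Av k a hk τ) := by
  have hpn : (p : ℕ) ≤ n := by have := p.isLt; omega
  constructor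
  · intro h
    constructor
    · by_contra hp
      push_neg at hp  -- hp : ↑p + k ≤ n + a
      set π := ins p τ with hπ
      set j := min (a - 1) (p : ℕ) with hj
      have hjp : j ≤ (p : ℕ) := min_le_right _ _
      have hja : j ≤ a - 1 := min_le_left _ _
      have hph : (p : ℕ) + (k - 1 - j) ≤ n := by omega
      set V : Finset (Fin (n+1)) :=
        univ.filter (fun x => (x : ℕ) < j ∨ n + 1 ≤ (x : ℕ) + (k - 1 - j)) with hV
      have hcV : V.card = k - 1 := by
        rw [hV, card_filter_fin (fun m => m < j ∨ n + 1 ≤ m + (k - 1 - j))]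
        rw [show (range (n+1)).filter (fun m => m < j ∨ n + 1 ≤ m + (k - 1 - j))
            = range j ∪ Ico (n + 1 - (k - 1 - j)) (n+1) by
          ext x; simp [Finset.mem_Ico]; omega]
        rw [Finset.card_union_of_disjoint (by
          rw [Finset.disjoint_left]; intro x hx1 hx2
          simp [Finset.mem_Ico] at hx1 hx2; omega)]
        rw [card_range, Nat.card_Ico]; omega
      have hpV : p ∉ V := by simp only [hV, mem_filter, mem_univ, true_and]; push_neg; omega
      set T : Finset (Fin (n+1)) := insert 0 (V.image π.symm) with hT
      have h0img : (0 : Fin (n+1)) ∉ V.image π.symm := by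
        rw [mem_image]; rintro ⟨x, hxV, hsym⟩
        apply hpV
        have : x = π 0 := by rw [← hsym]; simp
        rw [show π 0 = p from ins_zero p τ] at this
        exact this ▸ hxV
      have hcT : T.card = k := by
        rw [hT, card_insert_of_notMem h0img,
          Finset.card_image_of_injective _ π.symm.injective, hcV]; omega
      set f := T.orderEmbOfFin hcT with hf
      have hf0 : f ⟨0, hk⟩ = 0 := by
        rw [hf, Finset.orderEmbOfFin_zero hcT hk]
        exact le_antisymm (Finset.min'_le _ _ (mem_insert_self _ _)) (Fin.zero_le _)
      obtain ⟨σ, hσ1, hσ2⟩ := pattern_extract (fun t => π (f t))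
        (π.injective.comp f.injective)
      have hbound : (σ ⟨0, hk⟩ : ℕ) + 1 ≤ a := by
        rw [hσ2]
        have hle : (univ.filter fun t => π (f t) < π (f ⟨0, hk⟩)).card
            ≤ (univ.filter fun x : Fin (n+1) => (x : ℕ) < j).card := by
          apply Finset.card_le_card_of_injOn (fun t => π (f t))
          · intro t ht
            simp only [Finset.mem_coe, mem_filter, mem_univ, true_and] at ht ⊢
            rw [hf0, show π 0 = p from ins_zero p τ] at ht
            have hft0 : f t ≠ 0 := by
              intro he; rw [he, show π 0 = p from ins_zero p τ] at ht
              exact lt_irrefl _ ht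
            have hmem : f t ∈ V.image π.symm := by
              rcases Finset.mem_insert.1 (Finset.orderEmbOfFin_mem T hcT t) with h' | h'
              · exact absurd h' hft0
              · exact h'
            obtain ⟨x, hxV, hx⟩ := mem_image.1 hmem
            have hxval : π (f t) = x := by rw [← hx]; simp
            rw [hxval] at ht ⊢
            simp only [hV, mem_filter, mem_univ, true_and] at hxV
            have hxp : (x : ℕ) < (p : ℕ) := ht
            omega
          · intro s hs t ht hst
            exact f.injective (π.injective hst)
        rw [card_filter_lt] at hle
        omega
      exact h σ hbound ⟨f, f.strictMono, hσ1⟩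
    · intro σ hσ hcon
      obtain ⟨g, hg, hgiff⟩ := hcon
      apply h σ hσ
      refine ⟨fun s => (g s).succ, Fin.strictMono_succ.comp hg, fun s t => ?_⟩
      rw [ins_succ, ins_succ, Fin.succAbove_lt_succAbove_iff]
      exact hgiff s t
  · rintro ⟨hp, hτ⟩ σ hσ ⟨f, hf, hfiff⟩
    set z : Fin k := ⟨0, hk⟩ with hz
    by_cases hf0 : f z = 0
    · have hcS : (univ.filter fun t => σ z < σ t).card = k - 1 - (σ z : ℕ) := by
        have he : (univ.filter fun t => σ z < σ t).card
            = (univ.filter fun y : Fin k => σ z < y).card := by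
          refine Finset.card_bij (fun t _ => σ t) ?_ ?_ ?_
          · intro t ht; simp only [mem_filter, mem_univ, true_and] at ht ⊢; exact ht
          · intro s _ t _ h; exact σ.injective h
          · intro y hy
            simp only [mem_filter, mem_univ, true_and] at hy
            exact ⟨σ.symm y, by simp [hy], by simp⟩
        rw [he, show (univ.filter fun y : Fin k => σ z < y)
            = univ.filter (fun y : Fin k => ((σ z : ℕ) + 1) ≤ ↑y) from
          filter_congr (fun y _ => by rw [Fin.lt_def]; constructor <;> (intro; omega)),
          card_filter_ge]
        omega
      have hineq : (univ.filter fun t => σ z < σ t).card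
          ≤ (univ.filter fun x : Fin (n+1) => ((p : ℕ) + 1) ≤ ↑x).card := by
        apply Finset.card_le_card_of_injOn (fun t => ins p τ (f t))
        · intro t ht
          simp only [Finset.mem_coe, mem_filter, mem_univ, true_and] at ht ⊢
          have hlt : ins p τ (f z) < ins p τ (f t) := (hfiff z t).2 ht
          rw [hf0, ins_zero] at hlt
          have := Fin.lt_def.1 hlt; omega
        · intro s _ t _ hst
          exact hf.injective ((ins p τ).injective hst)
      rw [hcS, card_filter_ge] at hineq
      have hσzk : (σ z : ℕ) < k := (σ z).isLt
      omega
    · have hall : ∀ t, f t ≠ 0 := by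
        intro t he
        by_cases htz : t = z
        · exact hf0 (htz ▸ he)
        · have hzt : z < t := by
            refine lt_of_le_of_ne ?_ (fun h => htz h.symm)
            rw [hz, Fin.le_def]; exact Nat.zero_le _
          have := hf hzt
          rw [he] at this
          exact absurd this (Fin.not_lt_zero _)
      refine hτ σ hσ ⟨fun t => (f t).pred (hall t), ?_, ?_⟩
      · intro s t hst; rw [Fin.pred_lt_pred_iff]; exact hf hst
      · intro s t
        have h' := hfiff s t
        rw [show f s = ((f s).pred (hall s)).succ from (Fin.succ_pred _ _).symm,
            show f t = ((f t).pred (hall t)).succ from (Fin.succ_pred _ _).symm,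
            ins_succ, ins_succ, Fin.succAbove_lt_succAbove_iff] at h'
        exact h'


noncomputable def insEquiv {n : ℕ} : Fin (n+1) × Equiv.Perm (Fin n) ≃ Equiv.Perm (Fin (n+1)) :=
  Equiv.ofBijective (fun q : Fin (n+1) × Equiv.Perm (Fin n) => ins q.1 q.2) (by
    rw [Fintype.bijective_iff_injective_and_card]
    constructor
    · intro ⟨p, τ⟩ ⟨p', τ'⟩ h
      simp only at h
      have hp : p = p' := by rw [← ins_zero p τ, ← ins_zero p' τ', h]
      subst hp
      have hτ : τ = τ' := by
        ext i
        have := congrArg (fun e : Equiv.Perm (Fin (n+1)) => e i.succ) h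
        simp only [ins_succ] at this
        exact congrArg Fin.val (p.succAbove_right_injective this)
      rw [hτ]
    · simp [Fintype.card_perm, Nat.factorial_succ])

lemma card_p {k a n : ℕ} (ha1 : 1 ≤ a) (hak : a ≤ k) (hkn : k ≤ n + 1) :
    Nat.card {p : Fin (n+1) // n + a < ↑p + k} = k - a := by
  rw [Nat.card_eq_fintype_card, Fintype.card_subtype]
  rw [show (univ.filter fun p : Fin (n+1) => n + a < ↑p + k)
      = univ.filter (fun p : Fin (n+1) => (n + a + 1 - k) ≤ ↑p) from
    filter_congr (fun p _ => by constructor <;> (intro; omega))]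
  rw [card_filter_ge]
  omega

theorem statement17 (k a : ℕ) (hk : 1 ≤ k) (ha1 : 1 ≤ a) (hak : a ≤ k)
    (n : ℕ) (hn : k - 1 ≤ n) :
    Nat.card {π : Equiv.Perm (Fin n) //
        ∀ σ : Equiv.Perm (Fin k), (σ ⟨0, hk⟩ : ℕ) + 1 ≤ a → PAvoids π σ} =
      Nat.factorial (k - 1) * (k - a) ^ (n + 1 - k) := by
  show Nat.card {π : Equiv.Perm (Fin n) // Av k a hk π} = _
  induction n, hn using Nat.le_induction with
  | base =>
    have hall : ∀ π : Equiv.Perm (Fin (k-1)), Av k a hk π := by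
      rintro π σ _ ⟨f, hf, -⟩
      have := Fintype.card_le_of_injective f hf.injective
      simp only [Fintype.card_fin] at this
      omega
    rw [Nat.card_congr (Equiv.subtypeUnivEquiv hall), Nat.card_eq_fintype_card,
      Fintype.card_perm, Fintype.card_fin, show k - 1 + 1 - k = 0 by omega, pow_zero, mul_one]
  | succ n hn ih =>
    have hkn : k ≤ n + 1 := by omega
    calc Nat.card {π : Equiv.Perm (Fin (n+1)) // Av k a hk π}
        = Nat.card {q : Fin (n+1) × Equiv.Perm (Fin n) // Av k a hk (ins q.1 q.2)} :=
          (Nat.card_congr (Equiv.subtypeEquiv insEquiv (fun q => Iff.rfl))).symm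
      _ = Nat.card {q : Fin (n+1) × Equiv.Perm (Fin n) //
            (n + a < ↑q.1 + k) ∧ Av k a hk q.2} :=
          Nat.card_congr (Equiv.subtypeEquivRight
            (fun q => av_ins_iff hk ha1 hak hkn q.1 q.2))
      _ = Nat.card ({p : Fin (n+1) // n + a < ↑p + k} × {τ : Equiv.Perm (Fin n) // Av k a hk τ}) :=
          Nat.card_congr (Equiv.subtypeProdEquivProd
            (p := fun p : Fin (n+1) => n + a < ↑p + k) (q := fun τ => Av k a hk τ))
      _ = Nat.card {p : Fin (n+1) // n + a < ↑p + k}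
            * Nat.card {τ : Equiv.Perm (Fin n) // Av k a hk τ} := Nat.card_prod _ _
      _ = (k - a) * ((k-1).factorial * (k - a) ^ (n + 1 - k)) := by
          rw [card_p ha1 hak hkn, ih]
      _ = Nat.factorial (k - 1) * (k - a) ^ (n + 1 + 1 - k) := by
          rw [show n + 1 + 1 - k = (n + 1 - k) + 1 by omega, pow_succ]; ring
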